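/- (A^R_2 as an ideal of V_2.) In the ring V_2 of symmetric Laurent polynomials in z1, z2 over R = ℂ[q1^{±1}, q2^{±1}] (the subring of R[z1^{±1}, z2^{±1}] consisting of elements invariant under exchanging z1 and z2), the ideal generated by Sh_2(0, 0) and Sh_2(1, 0) is equal to the ideal generated by g1 = 2q·z1² − (1 + q1 + q2 − 2q + q1·q + q2·q + q²)·z1·z2 + 2q·z2² and g2 = (1 − q1)(1 − q2)(1 − q)·(z1 + z2). -/
import Mathlib


open MvPolynomial Finset

noncomputable section

/-- `Fk k` is the field `F_k = ℂ(q1, q2, z1, …, zk)`, realized as the fraction field of the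
polynomial ring `ℂ[q1, q2, z1, …, zk]`. -/
abbrev Fk (k : ℕ) : Type := FractionRing (MvPolynomial (Fin 2 ⊕ Fin k) ℂ)

/-- The indeterminate `q1` in `F_k`. -/
def q1F (k : ℕ) : Fk k := algebraMap (MvPolynomial (Fin 2 ⊕ Fin k) ℂ) (Fk k) (X (Sum.inl 0))

/-- The indeterminate `q2` in `F_k`. -/
def q2F (k : ℕ) : Fk k := algebraMap (MvPolynomial (Fin 2 ⊕ Fin k) ℂ) (Fk k) (X (Sum.inl 1))

/-- The indeterminates `z1, …, zk` in `F_k` (zero-indexed: `zF k i` is `z_{i+1}`). -/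
def zF (k : ℕ) (i : Fin k) : Fk k := algebraMap (MvPolynomial (Fin 2 ⊕ Fin k) ℂ) (Fk k) (X (Sum.inr i))

/-- `ω(x, y) = (x − q·y)(y − q1·x)(y − q2·x)/(x − y)`, where `q = q1·q2`. -/
def omegaF {K : Type*} [Field K] (q1 q2 x y : K) : K :=
  (x - q1 * q2 * y) * (y - q1 * x) * (y - q2 * x) / (x - y)

/-- The monomial shuffle element
`Sh_k(d) = Σ_{σ ∈ S_k} ∏_{i=1}^k z_{σ(i)}^{d_i} · ∏_{1 ≤ i < j ≤ k} ω(z_{σ(i)}, z_{σ(j)})`,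
as a rational expression in the values `z : Fin k → K`. -/
def Sh {K : Type*} [Field K] (q1 q2 : K) {k : ℕ} (z : Fin k → K) (d : Fin k → ℤ) : K :=
  ∑ σ : Equiv.Perm (Fin k), (∏ i, z (σ i) ^ d i) *
    ∏ p ∈ Finset.univ.filter (fun p : Fin k × Fin k => p.1 < p.2),
      omegaF q1 q2 (z (σ p.1)) (z (σ p.2))

/-- The Laurent polynomial subring `R[z1^{±1}, …, zk^{±1}]` of `K`, where
`R = ℂ[q1^{±1}, q2^{±1}]`: the subring generated by the complex constants,
`q1^{±1}`, `q2^{±1}` and the `z_i^{±1}`. -/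
def laurentSubring {K : Type*} [Field K] [Algebra ℂ K] (q1 q2 : K) {k : ℕ} (z : Fin k → K) :
    Subring K :=
  Subring.closure ((Set.range fun c : ℂ => algebraMap ℂ K c) ∪ {q1, q1⁻¹, q2, q2⁻¹} ∪
    Set.range z ∪ Set.range fun i => (z i)⁻¹)

/-- The `ℂ(q1,q2)`-algebra automorphism of `F_k` fixing `q1, q2` and sending `z_i ↦ z_{τ(i)}`. -/
def permAut (k : ℕ) (τ : Equiv.Perm (Fin k)) : Fk k ≃+* Fk k :=
  IsFractionRing.ringEquivOfRingEquiv
    (MvPolynomial.renameEquiv ℂ (Equiv.sumCongr (Equiv.refl (Fin 2)) τ)).toRingEquiv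

/-- Membership in `V_2`, the ring of symmetric Laurent polynomials in `z1, z2` over
`R = ℂ[q1^{±1}, q2^{±1}]`: a Laurent polynomial invariant under exchanging `z1` and `z2`. -/
def memV2 (x : Fk 2) : Prop :=
  x ∈ laurentSubring (q1F 2) (q2F 2) (zF 2) ∧ permAut 2 (Equiv.swap 0 1) x = x


namespace AR2Aux

lemma Sh_two {K : Type*} [Field K] (q1 q2 : K) (z : Fin 2 → K) (d : Fin 2 → ℤ) :
    Sh q1 q2 z d = (z 0 ^ d 0 * z 1 ^ d 1) * omegaF q1 q2 (z 0) (z 1)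
      + (z 1 ^ d 0 * z 0 ^ d 1) * omegaF q1 q2 (z 1) (z 0) := by
  have huniv : (Finset.univ : Finset (Equiv.Perm (Fin 2))) = {1, Equiv.swap 0 1} := by decide
  have hfilter : (Finset.univ.filter (fun p : Fin 2 × Fin 2 => p.1 < p.2)) = {(0,1)} := by decide
  rw [Sh, huniv, hfilter, Finset.sum_insert (by decide), Finset.sum_singleton]
  simp [Fin.prod_univ_two, Equiv.swap_apply_left, Equiv.swap_apply_right]

lemma omega_add {K : Type*} [Field K] (a b x y : K) (h : x - y ≠ 0) (h' : y - x ≠ 0) :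
    omegaF a b x y + omegaF a b y x
      = 2 * (a * b) * x ^ 2
          - (1 + a + b - 2 * (a * b) + a * (a * b) + b * (a * b) + (a * b) ^ 2) * (x * y)
          + 2 * (a * b) * y ^ 2 := by
  rw [omegaF, omegaF, div_add_div _ _ h h', div_eq_iff (mul_ne_zero h h')]
  ring

lemma omega_add' {K : Type*} [Field K] (a b x y : K) (h : x - y ≠ 0) (h' : y - x ≠ 0)
    (h2 : (2 : K) ≠ 0) :
    x * omegaF a b x y + y * omegaF a b y x
      = (x + y) * (2 : K)⁻¹ *
          (2 * (a * b) * x ^ 2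
            - (1 + a + b - 2 * (a * b) + a * (a * b) + b * (a * b) + (a * b) ^ 2) * (x * y)
            + 2 * (a * b) * y ^ 2)
        + (x * y) * (2 : K)⁻¹ * ((1 - a) * (1 - b) * (1 - a * b) * (x + y)) := by
  rw [omegaF, omegaF]
  field_simp
  ring

lemma comb_back {K : Type*} [Field K] (a b u v g1 g2 : K) (hu : u ≠ 0) (hv : v ≠ 0)
    (h2 : (2 : K) ≠ 0) :
    a * g1 + b * g2
      = (a - b * ((u + v) * (u⁻¹ * v⁻¹))) * g1
        + b * (2 * (u⁻¹ * v⁻¹)) *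
            ((u + v) * (2 : K)⁻¹ * g1 + (u * v) * (2 : K)⁻¹ * g2) := by
  field_simp
  ring

lemma algMap_inj : Function.Injective
    (algebraMap (MvPolynomial (Fin 2 ⊕ Fin 2) ℂ) (Fk 2)) :=
  IsFractionRing.injective _ _

lemma zF_ne_zero (i : Fin 2) : zF 2 i ≠ 0 := by
  rw [zF]
  intro h
  have hX : (X (Sum.inr i) : MvPolynomial (Fin 2 ⊕ Fin 2) ℂ) = 0 :=
    algMap_inj (by rw [map_zero]; exact h)
  exact MvPolynomial.X_ne_zero _ hX

lemma zF_ne : zF 2 0 ≠ zF 2 1 := by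
  rw [zF, zF]
  intro h
  have := Sum.inr_injective (MvPolynomial.X_injective (algMap_inj h))
  exact absurd this (by decide)

lemma memS_z (i : Fin 2) : zF 2 i ∈ laurentSubring (q1F 2) (q2F 2) (zF 2) :=
  Subring.subset_closure (by
    simp only [Set.mem_union, Set.mem_range]
    exact Or.inl (Or.inr ⟨i, rfl⟩))

lemma memS_zinv (i : Fin 2) : (zF 2 i)⁻¹ ∈ laurentSubring (q1F 2) (q2F 2) (zF 2) :=
  Subring.subset_closure (by
    simp only [Set.mem_union, Set.mem_range]
    exact Or.inr ⟨i, rfl⟩)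

lemma memS_const (c : ℂ) :
    algebraMap ℂ (Fk 2) c ∈ laurentSubring (q1F 2) (q2F 2) (zF 2) :=
  Subring.subset_closure (by
    simp only [Set.mem_union, Set.mem_range]
    exact Or.inl (Or.inl (Or.inl ⟨c, rfl⟩)))

lemma permAut_algebraMap (τ : Equiv.Perm (Fin 2)) (p : MvPolynomial (Fin 2 ⊕ Fin 2) ℂ) :
    permAut 2 τ (algebraMap (MvPolynomial (Fin 2 ⊕ Fin 2) ℂ) (Fk 2) p)
      = algebraMap (MvPolynomial (Fin 2 ⊕ Fin 2) ℂ) (Fk 2)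
        (rename (Equiv.sumCongr (Equiv.refl (Fin 2)) τ) p) := by
  rw [permAut, IsFractionRing.ringEquivOfRingEquiv_algebraMap]
  rfl

lemma permAut_z (i : Fin 2) :
    permAut 2 (Equiv.swap 0 1) (zF 2 i) = zF 2 (Equiv.swap 0 1 i) := by
  rw [zF, permAut_algebraMap]
  have : (Equiv.sumCongr (Equiv.refl (Fin 2)) (Equiv.swap 0 1)) (Sum.inr i)
      = Sum.inr ((Equiv.swap 0 1) i) := rfl
  rw [rename_X, this, zF]

lemma permAut_const (c : ℂ) :
    permAut 2 (Equiv.swap 0 1) (algebraMap ℂ (Fk 2) c) = algebraMap ℂ (Fk 2) c := by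
  rw [IsScalarTower.algebraMap_apply ℂ (MvPolynomial (Fin 2 ⊕ Fin 2) ℂ) (Fk 2),
    permAut_algebraMap]
  simp [MvPolynomial.algebraMap_eq]

lemma memV2_add {a b : Fk 2} (ha : memV2 a) (hb : memV2 b) : memV2 (a + b) :=
  ⟨Subring.add_mem _ ha.1 hb.1, by rw [map_add, ha.2, hb.2]⟩

lemma memV2_sub {a b : Fk 2} (ha : memV2 a) (hb : memV2 b) : memV2 (a - b) :=
  ⟨Subring.sub_mem _ ha.1 hb.1, by rw [map_sub, ha.2, hb.2]⟩

lemma memV2_mul {a b : Fk 2} (ha : memV2 a) (hb : memV2 b) : memV2 (a * b) :=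
  ⟨Subring.mul_mem _ ha.1 hb.1, by rw [map_mul, ha.2, hb.2]⟩

lemma memV2_zsum : memV2 (zF 2 0 + zF 2 1) := by
  refine ⟨Subring.add_mem _ (memS_z 0) (memS_z 1), ?_⟩
  rw [map_add, permAut_z, permAut_z]
  simp [Equiv.swap_apply_left, Equiv.swap_apply_right, add_comm]

lemma memV2_zprod : memV2 (zF 2 0 * zF 2 1) := by
  refine ⟨Subring.mul_mem _ (memS_z 0) (memS_z 1), ?_⟩
  rw [map_mul, permAut_z, permAut_z]
  simp [Equiv.swap_apply_left, Equiv.swap_apply_right, mul_comm]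

lemma memV2_zprodinv : memV2 ((zF 2 0)⁻¹ * (zF 2 1)⁻¹) := by
  refine ⟨Subring.mul_mem _ (memS_zinv 0) (memS_zinv 1), ?_⟩
  rw [map_mul, map_inv₀, map_inv₀, permAut_z, permAut_z]
  simp [Equiv.swap_apply_left, Equiv.swap_apply_right, mul_comm]

lemma memV2_two : memV2 (2 : Fk 2) := by
  refine ⟨?_, by rw [map_ofNat]⟩
  have h2 : (2 : Fk 2) = algebraMap ℂ (Fk 2) 2 := by rw [map_ofNat]
  rw [h2]; exact memS_const 2

lemma memV2_halfinv : memV2 ((2 : Fk 2)⁻¹) := by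
  refine ⟨?_, by rw [map_inv₀, map_ofNat]⟩
  have h2 : ((2 : Fk 2))⁻¹ = algebraMap ℂ (Fk 2) 2⁻¹ := by rw [map_inv₀, map_ofNat]
  rw [h2]; exact memS_const _

end AR2Aux

set_option maxHeartbeats 1000000 in
open AR2Aux in
/-- `A^R_2` as an ideal of `V_2`: in `V_2`, the ideal generated by `Sh_2(0,0)` and `Sh_2(1,0)`
equals the ideal generated by `g1 = 2q·z1² − (1 + q1 + q2 − 2q + q1·q + q2·q + q²)·z1·z2 + 2q·z2²`
and `g2 = (1 − q1)(1 − q2)(1 − q)·(z1 + z2)`. -/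
theorem AR2_ideal_eq :
    ∀ x : Fk 2,
      (∃ a b : Fk 2, memV2 a ∧ memV2 b ∧
        x = a * Sh (q1F 2) (q2F 2) (zF 2) ![0, 0] + b * Sh (q1F 2) (q2F 2) (zF 2) ![1, 0]) ↔
      (∃ a b : Fk 2, memV2 a ∧ memV2 b ∧
        x = a * (2 * (q1F 2 * q2F 2) * zF 2 0 ^ 2
              - (1 + q1F 2 + q2F 2 - 2 * (q1F 2 * q2F 2) + q1F 2 * (q1F 2 * q2F 2)
                  + q2F 2 * (q1F 2 * q2F 2) + (q1F 2 * q2F 2) ^ 2) * (zF 2 0 * zF 2 1)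
              + 2 * (q1F 2 * q2F 2) * zF 2 1 ^ 2)
          + b * ((1 - q1F 2) * (1 - q2F 2) * (1 - q1F 2 * q2F 2) * (zF 2 0 + zF 2 1))) := by
  intro x
  have h2 : (2 : Fk 2) ≠ 0 := two_ne_zero
  have hz0 : zF 2 0 ≠ 0 := zF_ne_zero 0
  have hz1 : zF 2 1 ≠ 0 := zF_ne_zero 1
  have hzz : zF 2 0 - zF 2 1 ≠ 0 := sub_ne_zero.mpr zF_ne
  have hzz' : zF 2 1 - zF 2 0 ≠ 0 := sub_ne_zero.mpr (Ne.symm zF_ne)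
  set G1 : Fk 2 := 2 * (q1F 2 * q2F 2) * zF 2 0 ^ 2
      - (1 + q1F 2 + q2F 2 - 2 * (q1F 2 * q2F 2) + q1F 2 * (q1F 2 * q2F 2)
          + q2F 2 * (q1F 2 * q2F 2) + (q1F 2 * q2F 2) ^ 2) * (zF 2 0 * zF 2 1)
      + 2 * (q1F 2 * q2F 2) * zF 2 1 ^ 2 with hG1
  set G2 : Fk 2 := (1 - q1F 2) * (1 - q2F 2) * (1 - q1F 2 * q2F 2) * (zF 2 0 + zF 2 1)
    with hG2
  have hSh00 : Sh (q1F 2) (q2F 2) (zF 2) ![0, 0] = G1 := by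
    rw [Sh_two]
    simp only [Matrix.cons_val_zero, Matrix.cons_val_one, Matrix.head_cons, zpow_zero,
      one_mul]
    rw [hG1]
    exact omega_add _ _ _ _ hzz hzz'
  have hSh10 : Sh (q1F 2) (q2F 2) (zF 2) ![1, 0] =
      (zF 2 0 + zF 2 1) * (2 : Fk 2)⁻¹ * G1 + (zF 2 0 * zF 2 1) * (2 : Fk 2)⁻¹ * G2 := by
    rw [Sh_two]
    simp only [Matrix.cons_val_zero, Matrix.cons_val_one, Matrix.head_cons, zpow_zero,
      zpow_one, mul_one]
    rw [hG1, hG2]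
    exact omega_add' _ _ _ _ hzz hzz' h2
  constructor
  · rintro ⟨a, b, ha, hb, hx⟩
    refine ⟨a + b * ((zF 2 0 + zF 2 1) * (2 : Fk 2)⁻¹),
      b * ((zF 2 0 * zF 2 1) * (2 : Fk 2)⁻¹), ?_, ?_, ?_⟩
    · exact memV2_add ha (memV2_mul hb (memV2_mul memV2_zsum memV2_halfinv))
    · exact memV2_mul hb (memV2_mul memV2_zprod memV2_halfinv)
    · rw [hx, hSh00, hSh10]; ring
  · rintro ⟨a, b, ha, hb, hx⟩
    refine ⟨a - b * ((zF 2 0 + zF 2 1) * ((zF 2 0)⁻¹ * (zF 2 1)⁻¹)),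
      b * (2 * ((zF 2 0)⁻¹ * (zF 2 1)⁻¹)), ?_, ?_, ?_⟩
    · exact memV2_sub ha (memV2_mul hb (memV2_mul memV2_zsum memV2_zprodinv))
    · exact memV2_mul hb (memV2_mul memV2_two memV2_zprodinv)
    · rw [hx, hSh00, hSh10]
      exact comb_back a b (zF 2 0) (zF 2 1) G1 G2 hz0 hz1 h2


end
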